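/- Let f : ℝ≥0 × E × E → E satisfy ‖f(t,x,y) - f(t,x₁,y₁)‖² ≤ L(‖x-x₁‖² + ‖y-y₁‖²) for all t, and suppose for every bounded set K ⊆ E × E, sup_{(x,y)∈K} ‖f(t+ω,x,y) - f(t,x,y)‖ → 0 as t → ∞. If X : ℝ≥0 → E is bounded and S-asymptotically ω-periodic with ω a positive integer, then t ↦ f(t, X(⌊t⌋), X(t)) is S-asymptotically ω-periodic. -/

import Mathlib

open Filter

theorem stmt_16 {E : Type*} [NormedAddCommGroup E] [NormedSpace ℝ E] [CompleteSpace E]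
    (ω : ℕ) (hω : 0 < ω) (f : ℝ → E → E → E) (L : ℝ) (hL : 0 < L)
    (hlip : ∀ t : ℝ, 0 ≤ t → ∀ x y x₁ y₁ : E,
      ‖f t x y - f t x₁ y₁‖ ^ 2 ≤ L * (‖x - x₁‖ ^ 2 + ‖y - y₁‖ ^ 2))
    (hunif : ∀ K : Set (E × E), Bornology.IsBounded K → ∀ ε > 0, ∃ T : ℝ, ∀ t ≥ T,
      ∀ p ∈ K, ‖f (t + ω) p.1 p.2 - f t p.1 p.2‖ < ε)
    (X : ℝ → E) (hXbd : Bornology.IsBounded (Set.range X))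
    (hX : Tendsto (fun t : ℝ => ‖X (t + ω) - X t‖) atTop (nhds 0)) :
    Tendsto (fun t : ℝ =>
      ‖f (t + ω) (X (⌊t + (ω : ℝ)⌋ : ℝ)) (X (t + ω)) - f t (X (⌊t⌋ : ℝ)) (X t)‖)
      atTop (nhds 0) := by
  -- floor tends to atTop
  have hfloor : Tendsto (fun t : ℝ => (⌊t⌋ : ℝ)) atTop atTop := by
    apply tendsto_atTop_mono (fun t => (Int.sub_one_lt_floor t).le)
    exact tendsto_atTop_add_const_right _ (-1) tendsto_id
  -- X(⌊t⌋ + ω) - X(⌊t⌋) tends to 0 in norm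
  have hX2 : Tendsto (fun t : ℝ => ‖X ((⌊t + (ω : ℝ)⌋ : ℝ)) - X ((⌊t⌋ : ℝ))‖)
      atTop (nhds 0) := by
    have := hX.comp hfloor
    refine this.congr (fun t => ?_)
    simp only [Function.comp]
    rw [Int.floor_add_natCast]
    push_cast
    ring_nf
  -- the second piece of the bound
  have hsqrt : Tendsto (fun t : ℝ =>
      Real.sqrt (L * (‖X ((⌊t + (ω : ℝ)⌋ : ℝ)) - X ((⌊t⌋ : ℝ))‖ ^ 2
        + ‖X (t + ω) - X t‖ ^ 2))) atTop (nhds 0) := by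
    have hin : Tendsto (fun t : ℝ =>
        L * (‖X ((⌊t + (ω : ℝ)⌋ : ℝ)) - X ((⌊t⌋ : ℝ))‖ ^ 2
          + ‖X (t + ω) - X t‖ ^ 2)) atTop (nhds (L * ((0:ℝ) ^ 2 + 0 ^ 2))) :=
      (((hX2.pow 2).add (hX.pow 2)).const_mul L)
    have hin0 : Tendsto (fun t : ℝ =>
        L * (‖X ((⌊t + (ω : ℝ)⌋ : ℝ)) - X ((⌊t⌋ : ℝ))‖ ^ 2
          + ‖X (t + ω) - X t‖ ^ 2)) atTop (nhds 0) := by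
      simpa using hin
    have := (Real.continuous_sqrt.tendsto' 0 0 Real.sqrt_zero).comp hin0
    exact this
  -- the first piece
  have hK : Bornology.IsBounded ((Set.range X) ×ˢ (Set.range X)) := hXbd.prod hXbd
  have hfirst : Tendsto (fun t : ℝ =>
      ‖f (t + ω) (X ((⌊t + (ω : ℝ)⌋ : ℝ))) (X (t + ω))
        - f t (X ((⌊t + (ω : ℝ)⌋ : ℝ))) (X (t + ω))‖) atTop (nhds 0) := by
    rw [Metric.tendsto_atTop]
    intro ε hε
    obtain ⟨T, hT⟩ := hunif _ hK ε hε
    refine ⟨T, fun t ht => ?_⟩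
    have := hT t ht (X ((⌊t + (ω : ℝ)⌋ : ℝ)), X (t + ω))
      ⟨Set.mem_range_self _, Set.mem_range_self _⟩
    simpa [Real.dist_eq, abs_of_nonneg (norm_nonneg _)] using this
  -- squeeze
  refine squeeze_zero' (Eventually.of_forall fun t => norm_nonneg _) ?_
    (by simpa only [add_zero] using hfirst.add hsqrt)
  filter_upwards [eventually_ge_atTop (0 : ℝ)] with t ht
  set a' := X ((⌊t + (ω : ℝ)⌋ : ℝ))
  set a := X ((⌊t⌋ : ℝ))
  set b' := X (t + ω)
  set b := X t
  have tri : ‖f (t + ω) a' b' - f t a b‖ ≤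
      ‖f (t + ω) a' b' - f t a' b'‖ + ‖f t a' b' - f t a b‖ := by
    have : f (t + ω) a' b' - f t a b
        = (f (t + ω) a' b' - f t a' b') + (f t a' b' - f t a b) := by abel
    rw [this]; exact norm_add_le _ _
  have hlip' : ‖f t a' b' - f t a b‖ ≤
      Real.sqrt (L * (‖a' - a‖ ^ 2 + ‖b' - b‖ ^ 2)) := by
    have h1 := hlip t ht a' b' a b
    calc ‖f t a' b' - f t a b‖ = Real.sqrt (‖f t a' b' - f t a b‖ ^ 2) := by
          rw [Real.sqrt_sq (norm_nonneg _)]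
      _ ≤ Real.sqrt (L * (‖a' - a‖ ^ 2 + ‖b' - b‖ ^ 2)) := Real.sqrt_le_sqrt h1
  exact tri.trans (add_le_add le_rfl hlip')
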